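/- Let φ : U_3 → GL_2(ℂ) be a group homomorphism from the group of 3×3 unipotent upper triangular integer matrices such that φ(E_{12}), φ(E_{23}), φ(E_{13}) are all unipotent. Then φ(E_{13}) = id. -/

import Mathlib

/-- The elementary matrix `E i j` (for `i ≠ j`) in `SL_d(ℤ)`. -/
def Emat (d : ℕ) (i j : Fin d) (h : i ≠ j) : Matrix.SpecialLinearGroup (Fin d) ℤ :=
  ⟨Matrix.transvection i j 1, Matrix.det_transvection_of_ne i j h 1⟩

/-- The subgroup `U_d ≤ SL_d(ℤ)` of unipotent upper triangular matrices, i.e. the subgroup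
generated by the elementary matrices `E i j` with `i < j`. -/
def unipotentUpper (d : ℕ) : Subgroup (Matrix.SpecialLinearGroup (Fin d) ℤ) :=
  Subgroup.closure { A | ∃ (i j : Fin d) (h : i < j), A = Emat d i j h.ne }

/-- The elementary matrix `E i j` (for `i < j`) as an element of `U_d`. -/
def EU (d : ℕ) (i j : Fin d) (h : i < j) : unipotentUpper d :=
  ⟨Emat d i j h.ne, Subgroup.subset_closure ⟨i, j, h, rfl⟩⟩

/-- A 2×2 nilpotent matrix over ℂ squares to zero. -/
lemma nilp_sq_zero (M : Matrix (Fin 2) (Fin 2) ℂ) (h : IsNilpotent M) : M * M = 0 := by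
  obtain ⟨k, hk⟩ := h
  have hk0 : k ≠ 0 := by
    rintro rfl
    rw [pow_zero] at hk
    exact one_ne_zero hk
  have hdet : M.det = 0 := by
    have : M.det ^ k = 0 := by rw [← Matrix.det_pow, hk]; simp
    exact pow_eq_zero_iff hk0 |>.1 this
  have hCH : M * M = M.trace • M - M.det • 1 := by
    ext i j
    fin_cases i <;> fin_cases j <;>
      simp [Matrix.mul_apply, Fin.sum_univ_two, Matrix.trace_fin_two, Matrix.det_fin_two,
        Matrix.one_apply] <;> ring
  rw [hdet, zero_smul, sub_zero] at hCH
  by_cases hM : M = 0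
  · rw [hM]; simp
  have key : ∀ n, M ^ (n + 1) = M.trace ^ n • M := by
    intro n
    induction n with
    | zero => simp
    | succ n ih =>
      rw [pow_succ, ih, Matrix.smul_mul, hCH, smul_smul, pow_succ]
  obtain ⟨m, rfl⟩ : ∃ m, k = m + 1 := ⟨k - 1, (Nat.succ_pred_eq_of_pos (Nat.pos_of_ne_zero hk0)).symm⟩
  rw [key m] at hk
  rcases smul_eq_zero.1 hk with ht | hM'
  · rcases pow_eq_zero_iff'.1 ht with ⟨ht0, -⟩
    rw [hCH, ht0, zero_smul]
  · exact absurd hM' hM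

/-- Two 2×2 matrices commuting with a nonzero square-zero 2×2 matrix commute with each other. -/
lemma centralizer_comm (M A B : Matrix (Fin 2) (Fin 2) ℂ) (h2 : M * M = 0) (hM : M ≠ 0)
    (hA : A * M = M * A) (hB : B * M = M * B) : A * B = B * A := by
  have e2 : ∀ i j, (M * M) i j = 0 := fun i j => by rw [h2]; rfl
  have eA : ∀ i j, (A * M) i j = (M * A) i j := fun i j => by rw [hA]
  have eB : ∀ i j, (B * M) i j = (M * B) i j := fun i j => by rw [hB]
  simp only [Matrix.mul_apply, Fin.sum_univ_two] at e2 eA eB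
  have e00 := e2 0 0; have e11 := e2 1 1
  have A01 := eA 0 1; have A11 := eA 1 1; have A00 := eA 0 0
  have B01 := eB 0 1; have B11 := eB 1 1; have B00 := eB 0 0
  have hbc : M 0 1 ≠ 0 ∨ M 1 0 ≠ 0 := by
    by_contra h
    push_neg at h
    obtain ⟨hb0, hc0⟩ := h
    apply hM
    have ha0 : M 0 0 = 0 := by
      have : M 0 0 * M 0 0 = 0 := by linear_combination e00 - M 0 1 * hc0
      exact mul_self_eq_zero.1 this
    have hd0 : M 1 1 = 0 := by
      have : M 1 1 * M 1 1 = 0 := by linear_combination e11 - M 0 1 * hc0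
      exact mul_self_eq_zero.1 this
    ext i j
    fin_cases i <;> fin_cases j <;>
      simp only [Fin.mk_zero, Fin.mk_one, ha0, hb0, hc0, hd0, Matrix.zero_apply]
  have D00 : A 0 1 * B 1 0 = B 0 1 * A 1 0 := by
    rcases hbc with h | h
    · apply mul_left_cancel₀ h
      linear_combination B 0 1 * A00 - A 0 1 * B00
    · apply mul_left_cancel₀ h
      linear_combination A 1 0 * B11 - B 1 0 * A11
  have D10 : A 1 0 * (B 0 0 - B 1 1) = B 1 0 * (A 0 0 - A 1 1) := by
    rcases hbc with h | h
    · apply mul_left_cancel₀ h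
      linear_combination A 1 0 * B01 - B 1 0 * A01 - (M 0 0 - M 1 1) * D00
    · apply mul_left_cancel₀ h
      linear_combination B 1 0 * (eA 1 0) - A 1 0 * (eB 1 0)
  have D01 : A 0 1 * (B 0 0 - B 1 1) = B 0 1 * (A 0 0 - A 1 1) := by
    rcases hbc with h | h
    · apply mul_left_cancel₀ h
      linear_combination A 0 1 * B01 - B 0 1 * A01
    · apply mul_left_cancel₀ h
      linear_combination (A 0 0 - A 1 1) * B11 - (B 0 0 - B 1 1) * A11 + M 0 1 * D10
  ext i j
  fin_cases i <;> fin_cases j <;>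
    simp only [Fin.mk_zero, Fin.mk_one, Matrix.mul_apply, Fin.sum_univ_two]
  · linear_combination D00
  · linear_combination -D01
  · linear_combination D10
  · linear_combination -D00

/-- If `φ : U_3 → GL_2(ℂ)` is a homomorphism such that `φ(E_{12})`, `φ(E_{23})`, `φ(E_{13})`
are all unipotent, then `φ(E_{13}) = id`. -/
theorem hom_U3_to_GL2_unipotent (φ : unipotentUpper 3 →* GL (Fin 2) ℂ)
    (h12 : IsNilpotent ((φ (EU 3 0 1 (by decide)) : Matrix (Fin 2) (Fin 2) ℂ) - 1))
    (h23 : IsNilpotent ((φ (EU 3 1 2 (by decide)) : Matrix (Fin 2) (Fin 2) ℂ) - 1))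
    (h13 : IsNilpotent ((φ (EU 3 0 2 (by decide)) : Matrix (Fin 2) (Fin 2) ℂ) - 1)) :
    φ (EU 3 0 2 (by decide)) = 1 := by
  set x := EU 3 0 1 (by decide) with hx
  set y := EU 3 1 2 (by decide) with hy
  set z := EU 3 0 2 (by decide) with hz
  -- group relations in U₃
  have hg1 : z * y * x = x * y := by
    apply Subtype.ext; apply Subtype.ext
    show ((Emat 3 0 2 (by decide) : Matrix (Fin 3) (Fin 3) ℤ) * Emat 3 1 2 (by decide) *
        Emat 3 0 1 (by decide) : Matrix (Fin 3) (Fin 3) ℤ) =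
      (Emat 3 0 1 (by decide) : Matrix (Fin 3) (Fin 3) ℤ) * Emat 3 1 2 (by decide)
    decide
  have hg2 : x * z = z * x := by
    apply Subtype.ext; apply Subtype.ext
    show ((Emat 3 0 1 (by decide) : Matrix (Fin 3) (Fin 3) ℤ) * Emat 3 0 2 (by decide) :
        Matrix (Fin 3) (Fin 3) ℤ) =
      (Emat 3 0 2 (by decide) : Matrix (Fin 3) (Fin 3) ℤ) * Emat 3 0 1 (by decide)
    decide
  have hg3 : y * z = z * y := by
    apply Subtype.ext; apply Subtype.ext
    show ((Emat 3 1 2 (by decide) : Matrix (Fin 3) (Fin 3) ℤ) * Emat 3 0 2 (by decide) :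
        Matrix (Fin 3) (Fin 3) ℤ) =
      (Emat 3 0 2 (by decide) : Matrix (Fin 3) (Fin 3) ℤ) * Emat 3 1 2 (by decide)
    decide
  -- pass to matrices over ℂ
  set A : Matrix (Fin 2) (Fin 2) ℂ := (φ x : Matrix (Fin 2) (Fin 2) ℂ) with hA
  set B : Matrix (Fin 2) (Fin 2) ℂ := (φ y : Matrix (Fin 2) (Fin 2) ℂ) with hB
  set C : Matrix (Fin 2) (Fin 2) ℂ := (φ z : Matrix (Fin 2) (Fin 2) ℂ) with hC
  have hm1 : C * B * A = A * B := by
    have := congrArg φ hg1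
    rw [map_mul, map_mul, map_mul] at this
    have := congrArg (Units.val) this
    simpa [Matrix.GeneralLinearGroup.coe_mul] using this
  have hm2 : A * C = C * A := by
    have := congrArg φ hg2
    rw [map_mul, map_mul] at this
    have := congrArg (Units.val) this
    simpa [Matrix.GeneralLinearGroup.coe_mul] using this
  have hm3 : B * C = C * B := by
    have := congrArg φ hg3
    rw [map_mul, map_mul] at this
    have := congrArg (Units.val) this
    simpa [Matrix.GeneralLinearGroup.coe_mul] using this
  set N : Matrix (Fin 2) (Fin 2) ℂ := C - 1 with hN
  have hN2 : N * N = 0 := nilp_sq_zero N h13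
  have hAN : A * N = N * A := by
    simp only [hN, Matrix.mul_sub, Matrix.sub_mul, Matrix.mul_one, Matrix.one_mul, hm2]
  have hBN : B * N = N * B := by
    simp only [hN, Matrix.mul_sub, Matrix.sub_mul, Matrix.mul_one, Matrix.one_mul, hm3]
  have hNzero : N = 0 := by
    by_contra hne
    have hcomm : A * B = B * A := centralizer_comm N A B hN2 hne hAN hBN
    have : N * (B * A) = 0 := by
      have : C * (B * A) = B * A := by
        rw [← mul_assoc, hm1, hcomm]
      calc N * (B * A) = C * (B * A) - 1 * (B * A) := by rw [hN, Matrix.sub_mul]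
        _ = 0 := by rw [this, Matrix.one_mul, sub_self]
    -- B * A is invertible
    have hBA : (B * A) * ((φ x)⁻¹ * (φ y)⁻¹ : GL (Fin 2) ℂ) = 1 := by
      have : ((φ y) * (φ x) * ((φ x)⁻¹ * (φ y)⁻¹) : GL (Fin 2) ℂ) = 1 := by group
      have := congrArg (Units.val) this
      rw [Units.val_mul (φ y * φ x), Units.val_mul (φ y) (φ x), Units.val_one] at this; exact this
    apply hne
    have h4 := congrArg (· * (((φ x)⁻¹ * (φ y)⁻¹ : GL (Fin 2) ℂ) : Matrix (Fin 2) (Fin 2) ℂ)) this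
    simp only [Matrix.zero_mul] at h4
    rwa [Matrix.mul_assoc, hBA, Matrix.mul_one] at h4
  apply Units.ext
  show C = 1
  have : C - 1 = 0 := hNzero
  rw [sub_eq_zero] at this; exact this
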